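/- Multiplicativity relation for twisted divisor sums: Let k be a positive integer, χ₁, χ₂ Dirichlet characters modulo N₁ and N₂ respectively, and let χ = χ₁χ₂ be the product character modulo N₁N₂. Then for all positive integers m and n: σ_k(χ₁,χ₂,m)·σ_k(χ₁,χ₂,n) = Σ_{δ∣gcd(m,n)} χ(δ)·δ^k·σ_k(χ₁,χ₂, mn/δ²), the sum over positive divisors δ of gcd(m,n). -/

import Mathlib

noncomputable section

/-- The twisted divisor sum `σ_k(χ₁,χ₂,n) = Σ_{δ∣n} χ₁(δ)·χ₂(n/δ)·δ^k`. -/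
def twistedSigma {N₁ N₂ : ℕ} (k : ℤ) (χ₁ : DirichletCharacter ℂ N₁)
    (χ₂ : DirichletCharacter ℂ N₂) (n : ℕ) : ℂ :=
  ∑ δ ∈ n.divisors, χ₁ δ * χ₂ (n / δ) * (δ : ℂ) ^ k

/-- The product character `χ₁χ₂` modulo `N₁N₂` (both factors lifted to level `N₁N₂`). -/
def prodChar {N₁ N₂ : ℕ} (χ₁ : DirichletCharacter ℂ N₁) (χ₂ : DirichletCharacter ℂ N₂) :
    DirichletCharacter ℂ (N₁ * N₂) :=
  DirichletCharacter.changeLevel (dvd_mul_right N₁ N₂) χ₁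
    * DirichletCharacter.changeLevel (dvd_mul_left N₂ N₁) χ₂

namespace TwistedAux

lemma changeLevel_natCast {N M : ℕ} (h : N ∣ M) (χ : DirichletCharacter ℂ N) (δ : ℕ)
    (hu : IsUnit ((δ : ZMod M))) :
    DirichletCharacter.changeLevel h χ ((δ : ZMod M)) = χ ((δ : ZMod N)) := by
  rw [← hu.unit_spec, DirichletCharacter.changeLevel_eq_cast_of_dvd χ h hu.unit,
    hu.unit_spec, ZMod.cast_natCast h]

lemma prodChar_apply {N₁ N₂ : ℕ} (χ₁ : DirichletCharacter ℂ N₁)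
    (χ₂ : DirichletCharacter ℂ N₂) (δ : ℕ) :
    prodChar χ₁ χ₂ ((δ : ZMod (N₁ * N₂))) = χ₁ ((δ : ZMod N₁)) * χ₂ ((δ : ZMod N₂)) := by
  by_cases h : IsUnit ((δ : ZMod (N₁ * N₂)))
  · rw [prodChar, MulChar.mul_apply, changeLevel_natCast _ χ₁ δ h,
      changeLevel_natCast _ χ₂ δ h]
  · rw [MulChar.map_nonunit _ h]
    have hnc : ¬ Nat.Coprime δ (N₁ * N₂) := by rwa [← ZMod.isUnit_iff_coprime]
    by_cases h1 : Nat.Coprime δ N₁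
    · have h2 : ¬ Nat.Coprime δ N₂ := fun h2 => hnc (Nat.Coprime.mul_right h1 h2)
      rw [MulChar.map_nonunit χ₂ (by rwa [ZMod.isUnit_iff_coprime]), mul_zero]
    · rw [MulChar.map_nonunit χ₁ (by rwa [ZMod.isUnit_iff_coprime]), zero_mul]

lemma nat_fact_eq {a b : ℕ} (ha : a ≠ 0) (hb : b ≠ 0)
    (h : ∀ p, p.Prime → a.factorization p = b.factorization p) : a = b :=
  Nat.dvd_antisymm ((Nat.factorization_prime_le_iff_dvd ha hb).mp fun p hp => (h p hp).le)
    ((Nat.factorization_prime_le_iff_dvd hb ha).mp fun p hp => (h p hp).ge)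

lemma fwd_abg {m n a b : ℕ} (ha : a ∣ m) (hb : b ∣ n) :
    a * b * Nat.gcd a (n / b) ∣ m * n := by
  have h1 : b * Nat.gcd a (n / b) ∣ n := by
    calc b * Nat.gcd a (n / b) ∣ b * (n / b) :=
          Nat.mul_dvd_mul_left b (Nat.gcd_dvd_right _ _)
      _ = n := Nat.mul_div_cancel' hb
  calc a * b * Nat.gcd a (n / b) = a * (b * Nat.gcd a (n / b)) := by ring
    _ ∣ m * n := mul_dvd_mul ha h1

lemma fwd_g2 {m n a b : ℕ} (ha : a ∣ m) (hb : b ∣ n) :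
    (Nat.gcd a (n / b)) ^ 2 ∣ m * n := by
  have hgab : Nat.gcd a (n / b) ∣ a * b := (Nat.gcd_dvd_left _ _).trans (dvd_mul_right a b)
  calc (Nat.gcd a (n / b)) ^ 2 = Nat.gcd a (n / b) * Nat.gcd a (n / b) := sq _
    _ ∣ (a * b) * Nat.gcd a (n / b) := mul_dvd_mul_right hgab _
    _ ∣ m * n := fwd_abg ha hb

lemma fwd_e {m n a b : ℕ} (ha : a ∣ m) (hb : b ∣ n) :
    a * b / Nat.gcd a (n / b) ∣ m * n / (Nat.gcd a (n / b)) ^ 2 := by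
  have hgab : Nat.gcd a (n / b) ∣ a * b := (Nat.gcd_dvd_left _ _).trans (dvd_mul_right a b)
  rw [Nat.dvd_div_iff_mul_dvd (fwd_g2 ha hb)]
  calc (Nat.gcd a (n / b)) ^ 2 * (a * b / Nat.gcd a (n / b))
      = Nat.gcd a (n / b) * (Nat.gcd a (n / b) * (a * b / Nat.gcd a (n / b))) := by ring
    _ = Nat.gcd a (n / b) * (a * b) := by rw [Nat.mul_div_cancel' hgab]
    _ = a * b * Nat.gcd a (n / b) := by ring
    _ ∣ m * n := fwd_abg ha hb

lemma bwd_a_dvd {m n d e : ℕ} (hm : m ≠ 0) (hn : n ≠ 0) (hd0 : d ≠ 0) (he0 : e ≠ 0)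
    (hdm : d ∣ m) (hdn : d ∣ n) (hxd : d * e * d ∣ m * n) :
    d * (d * e / Nat.gcd (d * e) n) ∣ m := by
  have hx0 : d * e ≠ 0 := Nat.mul_ne_zero hd0 he0
  have hG0 : Nat.gcd (d * e) n ≠ 0 := fun h => hx0 (Nat.eq_zero_of_gcd_eq_zero_left h)
  have hGx : Nat.gcd (d * e) n ∣ d * e := Nat.gcd_dvd_left _ _
  have hq0 : d * e / Nat.gcd (d * e) n ≠ 0 :=
    (Nat.div_pos (Nat.le_of_dvd (Nat.pos_of_ne_zero hx0) hGx) (Nat.pos_of_ne_zero hG0)).ne'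
  rw [← Nat.factorization_prime_le_iff_dvd (Nat.mul_ne_zero hd0 hq0) hm]
  intro p _
  have h1 := (Nat.factorization_le_iff_dvd hd0 hm).mpr hdm p
  have h2 := (Nat.factorization_le_iff_dvd (Nat.mul_ne_zero hx0 hd0)
    (Nat.mul_ne_zero hm hn)).mpr hxd p
  rw [Nat.factorization_mul hx0 hd0, Finsupp.add_apply, Nat.factorization_mul hm hn,
    Finsupp.add_apply, Nat.factorization_mul hd0 he0, Finsupp.add_apply] at h2
  rw [Nat.factorization_mul hd0 hq0, Finsupp.add_apply, Nat.factorization_div hGx,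
    Finsupp.tsub_apply, Nat.factorization_gcd hx0 hn, Finsupp.inf_apply,
    Nat.factorization_mul hd0 he0, Finsupp.add_apply]
  omega

lemma bwd_gcd_eq {n d e : ℕ} (hn : n ≠ 0) (hd0 : d ≠ 0) (he0 : e ≠ 0) (hdn : d ∣ n) :
    Nat.gcd (d * (d * e / Nat.gcd (d * e) n)) (n / (Nat.gcd (d * e) n / d)) = d := by
  have hx0 : d * e ≠ 0 := Nat.mul_ne_zero hd0 he0
  have hG0 : Nat.gcd (d * e) n ≠ 0 := fun h => hx0 (Nat.eq_zero_of_gcd_eq_zero_left h)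
  have hGx : Nat.gcd (d * e) n ∣ d * e := Nat.gcd_dvd_left _ _
  have hGn : Nat.gcd (d * e) n ∣ n := Nat.gcd_dvd_right _ _
  have hdG : d ∣ Nat.gcd (d * e) n := Nat.dvd_gcd (dvd_mul_right d e) hdn
  have hq0 : d * e / Nat.gcd (d * e) n ≠ 0 :=
    (Nat.div_pos (Nat.le_of_dvd (Nat.pos_of_ne_zero hx0) hGx) (Nat.pos_of_ne_zero hG0)).ne'
  have ha0 : d * (d * e / Nat.gcd (d * e) n) ≠ 0 := Nat.mul_ne_zero hd0 hq0
  have hbn : Nat.gcd (d * e) n / d ∣ n := (Nat.div_dvd_of_dvd hdG).trans hGn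
  have hb0 : Nat.gcd (d * e) n / d ≠ 0 :=
    (Nat.div_pos (Nat.le_of_dvd (Nat.pos_of_ne_zero hG0) hdG) (Nat.pos_of_ne_zero hd0)).ne'
  have hnb0 : n / (Nat.gcd (d * e) n / d) ≠ 0 :=
    (Nat.div_pos (Nat.le_of_dvd (Nat.pos_of_ne_zero hn) hbn) (Nat.pos_of_ne_zero hb0)).ne'
  apply nat_fact_eq (fun h => ha0 (Nat.eq_zero_of_gcd_eq_zero_left h)) hd0
  intro p _
  have h1 := (Nat.factorization_le_iff_dvd hd0 hx0).mpr (dvd_mul_right d e) p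
  have h2 := (Nat.factorization_le_iff_dvd hd0 hn).mpr hdn p
  rw [Nat.factorization_gcd ha0 hnb0, Finsupp.inf_apply,
    Nat.factorization_mul hd0 hq0, Finsupp.add_apply, Nat.factorization_div hGx,
    Finsupp.tsub_apply, Nat.factorization_div hbn, Nat.factorization_div hdG,
    Finsupp.tsub_apply, Finsupp.tsub_apply, Nat.factorization_gcd hx0 hn,
    Finsupp.inf_apply]
  omega

lemma mul_div_mul_div {d G x : ℕ} (hdG : d ∣ G) (hGx : G ∣ x) :
    d * (x / G) * (G / d) = x := by
  calc d * (x / G) * (G / d) = d * (G / d) * (x / G) := by ring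
    _ = G * (x / G) := by rw [Nat.mul_div_cancel' hdG]
    _ = x := Nat.mul_div_cancel' hGx

lemma fwd_left1 {n a b : ℕ} (ha0 : a ≠ 0) (hn : n ≠ 0) (hb : b ∣ n) (hb0 : b ≠ 0) :
    Nat.gcd a (n / b) * (a * b / Nat.gcd (a * b) n) = a := by
  have hnb0 : n / b ≠ 0 :=
    (Nat.div_pos (Nat.le_of_dvd (Nat.pos_of_ne_zero hn) hb) (Nat.pos_of_ne_zero hb0)).ne'
  have hab0 : a * b ≠ 0 := Nat.mul_ne_zero ha0 hb0
  have hg0 : Nat.gcd a (n / b) ≠ 0 := fun h => ha0 (Nat.eq_zero_of_gcd_eq_zero_left h)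
  have hG0 : Nat.gcd (a * b) n ≠ 0 := fun h => hab0 (Nat.eq_zero_of_gcd_eq_zero_left h)
  have hGx : Nat.gcd (a * b) n ∣ a * b := Nat.gcd_dvd_left _ _
  have hq0 : a * b / Nat.gcd (a * b) n ≠ 0 :=
    (Nat.div_pos (Nat.le_of_dvd (Nat.pos_of_ne_zero hab0) hGx) (Nat.pos_of_ne_zero hG0)).ne'
  apply nat_fact_eq (Nat.mul_ne_zero hg0 hq0) ha0
  intro p _
  have h1 := (Nat.factorization_le_iff_dvd hb0 hn).mpr hb p
  rw [Nat.factorization_mul hg0 hq0, Finsupp.add_apply, Nat.factorization_gcd ha0 hnb0,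
    Finsupp.inf_apply, Nat.factorization_div hb, Finsupp.tsub_apply,
    Nat.factorization_div hGx, Finsupp.tsub_apply, Nat.factorization_gcd hab0 hn,
    Finsupp.inf_apply, Nat.factorization_mul ha0 hb0, Finsupp.add_apply]
  omega

lemma fwd_left2 {n a b : ℕ} (ha0 : a ≠ 0) (hn : n ≠ 0) (hb : b ∣ n) (hb0 : b ≠ 0) :
    Nat.gcd (a * b) n / Nat.gcd a (n / b) = b := by
  have hnb0 : n / b ≠ 0 :=
    (Nat.div_pos (Nat.le_of_dvd (Nat.pos_of_ne_zero hn) hb) (Nat.pos_of_ne_zero hb0)).ne'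
  have hab0 : a * b ≠ 0 := Nat.mul_ne_zero ha0 hb0
  have hg0 : Nat.gcd a (n / b) ≠ 0 := fun h => ha0 (Nat.eq_zero_of_gcd_eq_zero_left h)
  have hG0 : Nat.gcd (a * b) n ≠ 0 := fun h => hab0 (Nat.eq_zero_of_gcd_eq_zero_left h)
  have hgG : Nat.gcd a (n / b) ∣ Nat.gcd (a * b) n :=
    Nat.dvd_gcd ((Nat.gcd_dvd_left _ _).trans (dvd_mul_right a b))
      ((Nat.gcd_dvd_right _ _).trans (Nat.div_dvd_of_dvd hb))
  have hq0 : Nat.gcd (a * b) n / Nat.gcd a (n / b) ≠ 0 :=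
    (Nat.div_pos (Nat.le_of_dvd (Nat.pos_of_ne_zero hG0) hgG) (Nat.pos_of_ne_zero hg0)).ne'
  apply nat_fact_eq hq0 hb0
  intro p _
  have h1 := (Nat.factorization_le_iff_dvd hb0 hn).mpr hb p
  rw [Nat.factorization_div hgG, Finsupp.tsub_apply, Nat.factorization_gcd hab0 hn,
    Finsupp.inf_apply, Nat.factorization_gcd ha0 hnb0, Finsupp.inf_apply,
    Nat.factorization_mul ha0 hb0, Finsupp.add_apply,
    Nat.factorization_div hb, Finsupp.tsub_apply]
  omega

end TwistedAux

open TwistedAux Finset in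
theorem twisted_sigma_multiplicativity
    {N₁ N₂ : ℕ}
    (k : ℕ) (hk : 0 < k)
    (χ₁ : DirichletCharacter ℂ N₁) (χ₂ : DirichletCharacter ℂ N₂)
    (m n : ℕ) (hm : 0 < m) (hn : 0 < n) :
    twistedSigma k χ₁ χ₂ m * twistedSigma k χ₁ χ₂ n
      = ∑ δ ∈ (Nat.gcd m n).divisors,
          prodChar χ₁ χ₂ δ * (δ : ℂ) ^ (k : ℕ)
            * twistedSigma k χ₁ χ₂ (m * n / δ ^ 2) := by
  have hm0 : m ≠ 0 := hm.ne'
  have hn0 : n ≠ 0 := hn.ne'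
  have hmn0 : m * n ≠ 0 := Nat.mul_ne_zero hm0 hn0
  have hgmn0 : Nat.gcd m n ≠ 0 := fun h => hm0 (Nat.eq_zero_of_gcd_eq_zero_left h)
  rw [show twistedSigma (k : ℤ) χ₁ χ₂ m * twistedSigma (k : ℤ) χ₁ χ₂ n
      = ∑ p ∈ m.divisors ×ˢ n.divisors,
          (χ₁ (p.1 : ZMod N₁) * χ₂ ((m / p.1 : ℕ) : ZMod N₂) * (p.1 : ℂ) ^ (k : ℤ))
            * (χ₁ (p.2 : ZMod N₁) * χ₂ ((n / p.2 : ℕ) : ZMod N₂) * (p.2 : ℂ) ^ (k : ℤ)) from by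
    rw [twistedSigma, twistedSigma, Finset.sum_mul_sum, Finset.sum_product]]
  rw [show (∑ δ ∈ (Nat.gcd m n).divisors,
        prodChar χ₁ χ₂ δ * (δ : ℂ) ^ (k : ℕ) * twistedSigma (k : ℤ) χ₁ χ₂ (m * n / δ ^ 2))
      = ∑ q ∈ (Nat.gcd m n).divisors.sigma (fun δ => (m * n / δ ^ 2).divisors),
          prodChar χ₁ χ₂ q.1 * (q.1 : ℂ) ^ (k : ℕ)
            * (χ₁ (q.2 : ZMod N₁) * χ₂ (((m * n / q.1 ^ 2) / q.2 : ℕ) : ZMod N₂)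
                * (q.2 : ℂ) ^ (k : ℤ)) from by
    rw [Finset.sum_sigma]
    exact Finset.sum_congr rfl fun δ _ => by rw [twistedSigma, Finset.mul_sum]]
  refine Finset.sum_nbij'
    (fun p => ⟨Nat.gcd p.1 (n / p.2), p.1 * p.2 / Nat.gcd p.1 (n / p.2)⟩)
    (fun q => (q.1 * (q.1 * q.2 / Nat.gcd (q.1 * q.2) n), Nat.gcd (q.1 * q.2) n / q.1))
    ?_ ?_ ?_ ?_ ?_
  · rintro ⟨a, b⟩ hab
    simp only [Finset.mem_product, Nat.mem_divisors] at hab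
    obtain ⟨⟨ha, -⟩, ⟨hb, -⟩⟩ := hab
    have ha0 : a ≠ 0 := fun h => hm0 (zero_dvd_iff.mp (h ▸ ha))
    have hg0 : Nat.gcd a (n / b) ≠ 0 := fun h => ha0 (Nat.eq_zero_of_gcd_eq_zero_left h)
    have hg2 := fwd_g2 (m := m) (n := n) ha hb
    refine Finset.mem_sigma.mpr ⟨Nat.mem_divisors.mpr ⟨?_, hgmn0⟩,
      Nat.mem_divisors.mpr ⟨fwd_e ha hb, ?_⟩⟩
    · exact Nat.dvd_gcd ((Nat.gcd_dvd_left _ _).trans ha)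
        ((Nat.gcd_dvd_right _ _).trans (Nat.div_dvd_of_dvd hb))
    · exact (Nat.div_pos (Nat.le_of_dvd (Nat.pos_of_ne_zero hmn0) hg2)
        (Nat.pos_of_ne_zero (pow_ne_zero 2 hg0))).ne'
  · rintro ⟨d, e⟩ hde
    simp only [Finset.mem_sigma, Nat.mem_divisors] at hde
    obtain ⟨⟨hd, -⟩, ⟨he, hmnd0⟩⟩ := hde
    have hd0 : d ≠ 0 := fun h => hgmn0 (by simpa [h] using hd)
    have hdm : d ∣ m := hd.trans (Nat.gcd_dvd_left _ _)
    have hdn : d ∣ n := hd.trans (Nat.gcd_dvd_right _ _)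
    have hd2 : d ^ 2 ∣ m * n := by
      calc d ^ 2 = d * d := sq d
        _ ∣ m * n := mul_dvd_mul hdm hdn
    have he0 : e ≠ 0 := fun h => hmnd0 (zero_dvd_iff.mp (h ▸ he))
    have hxd : d * e * d ∣ m * n := by
      have := (Nat.dvd_div_iff_mul_dvd hd2).mp he
      calc d * e * d = d ^ 2 * e := by ring
        _ ∣ m * n := this
    have hbn : Nat.gcd (d * e) n / d ∣ n :=
      (Nat.div_dvd_of_dvd (Nat.dvd_gcd (dvd_mul_right d e) hdn)).trans (Nat.gcd_dvd_right _ _)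
    exact Finset.mem_product.mpr ⟨Nat.mem_divisors.mpr ⟨bwd_a_dvd hm0 hn0 hd0 he0 hdm hdn hxd, hm0⟩,
      Nat.mem_divisors.mpr ⟨hbn, hn0⟩⟩
  · rintro ⟨a, b⟩ hab
    simp only [Finset.mem_product, Nat.mem_divisors] at hab
    obtain ⟨⟨ha, -⟩, ⟨hb, -⟩⟩ := hab
    have ha0 : a ≠ 0 := fun h => hm0 (zero_dvd_iff.mp (h ▸ ha))
    have hb0 : b ≠ 0 := fun h => hn0 (zero_dvd_iff.mp (h ▸ hb))
    have hgab : Nat.gcd a (n / b) ∣ a * b := (Nat.gcd_dvd_left _ _).trans (dvd_mul_right a b)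
    have hge : Nat.gcd a (n / b) * (a * b / Nat.gcd a (n / b)) = a * b :=
      Nat.mul_div_cancel' hgab
    simp only [hge]
    exact Prod.ext (fwd_left1 ha0 hn0 hb hb0) (fwd_left2 ha0 hn0 hb hb0)
  · rintro ⟨d, e⟩ hde
    simp only [Finset.mem_sigma, Nat.mem_divisors] at hde
    obtain ⟨⟨hd, -⟩, ⟨he, hmnd0⟩⟩ := hde
    have hd0 : d ≠ 0 := fun h => hgmn0 (by simpa [h] using hd)
    have hdn : d ∣ n := hd.trans (Nat.gcd_dvd_right _ _)
    have he0 : e ≠ 0 := fun h => hmnd0 (zero_dvd_iff.mp (h ▸ he))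
    have hdG : d ∣ Nat.gcd (d * e) n := Nat.dvd_gcd (dvd_mul_right d e) hdn
    have hGx : Nat.gcd (d * e) n ∣ d * e := Nat.gcd_dvd_left _ _
    have hab : d * (d * e / Nat.gcd (d * e) n) * (Nat.gcd (d * e) n / d) = d * e :=
      mul_div_mul_div hdG hGx
    have hg : Nat.gcd (d * (d * e / Nat.gcd (d * e) n)) (n / (Nat.gcd (d * e) n / d)) = d :=
      bwd_gcd_eq hn0 hd0 he0 hdn
    refine Sigma.ext ?_ ?_
    · exact hg
    · simp only [hg, hab]
      simp [Nat.mul_div_cancel_left e (Nat.pos_of_ne_zero hd0)]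
  · rintro ⟨a, b⟩ hab
    simp only [Finset.mem_product, Nat.mem_divisors] at hab
    obtain ⟨⟨ha, -⟩, ⟨hb, -⟩⟩ := hab
    have ha0 : a ≠ 0 := fun h => hm0 (zero_dvd_iff.mp (h ▸ ha))
    have hb0 : b ≠ 0 := fun h => hn0 (zero_dvd_iff.mp (h ▸ hb))
    have hgab : Nat.gcd a (n / b) ∣ a * b := (Nat.gcd_dvd_left _ _).trans (dvd_mul_right a b)
    set g := Nat.gcd a (n / b) with hgdef
    have hg0 : g ≠ 0 := fun h => ha0 (Nat.eq_zero_of_gcd_eq_zero_left h)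
    have hge : g * (a * b / g) = a * b := Nat.mul_div_cancel' hgab
    have habmn : a * b ∣ m * n := mul_dvd_mul ha hb
    have habg : a * b * g ∣ m * n := fwd_abg ha hb
    have hgmn : g ∣ m * n / (a * b) := (Nat.dvd_div_iff_mul_dvd habmn).mpr habg
    have hsq : g ^ 2 * (a * b / g) = a * b * g := by
      rw [sq, mul_assoc, hge]; ring
    have hf : g * ((m * n / g ^ 2) / (a * b / g)) = (m / a) * (n / b) := by
      rw [Nat.div_div_eq_div_mul, hsq,
        show m * n / (a * b * g) = m * n / (a * b) / g from
          (Nat.div_div_eq_div_mul _ _ _).symm,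
        Nat.mul_div_cancel' hgmn, Nat.div_mul_div_comm ha hb]
    simp only []
    rw [prodChar_apply]
    have h1 : (χ₁ ((g : ZMod N₁)) : ℂ) * χ₁ (((a * b / g : ℕ) : ZMod N₁))
        = χ₁ ((a : ZMod N₁)) * χ₁ ((b : ZMod N₁)) := by
      rw [← map_mul, ← map_mul, ← Nat.cast_mul, ← Nat.cast_mul, hge]
    have h2 : (χ₂ ((g : ZMod N₂)) : ℂ) * χ₂ (((m * n / g ^ 2 / (a * b / g) : ℕ) : ZMod N₂))
        = χ₂ (((m / a : ℕ) : ZMod N₂)) * χ₂ (((n / b : ℕ) : ZMod N₂)) := by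
      rw [← map_mul, ← map_mul, ← Nat.cast_mul, ← Nat.cast_mul, hf]
    have h3 : ((g : ℂ)) ^ (k : ℕ) * ((a * b / g : ℕ) : ℂ) ^ (k : ℕ)
        = (a : ℂ) ^ (k : ℕ) * (b : ℂ) ^ (k : ℕ) := by
      rw [← mul_pow, ← mul_pow, ← Nat.cast_mul, ← Nat.cast_mul, hge]
    simp only [zpow_natCast]
    calc χ₁ ((a : ZMod N₁)) * χ₂ (((m / a : ℕ) : ZMod N₂)) * (a : ℂ) ^ (k : ℕ)
          * (χ₁ ((b : ZMod N₁)) * χ₂ (((n / b : ℕ) : ZMod N₂)) * (b : ℂ) ^ (k : ℕ))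
        = (χ₁ ((a : ZMod N₁)) * χ₁ ((b : ZMod N₁)))
            * ((χ₂ (((m / a : ℕ) : ZMod N₂)) * χ₂ (((n / b : ℕ) : ZMod N₂)))
              * ((a : ℂ) ^ (k : ℕ) * (b : ℂ) ^ (k : ℕ))) := by ring
      _ = (χ₁ ((g : ZMod N₁)) * χ₁ (((a * b / g : ℕ) : ZMod N₁)))
            * ((χ₂ ((g : ZMod N₂)) * χ₂ (((m * n / g ^ 2 / (a * b / g) : ℕ) : ZMod N₂)))
              * (((g : ℂ)) ^ (k : ℕ) * ((a * b / g : ℕ) : ℂ) ^ (k : ℕ))) := by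
          rw [h1, h2, h3]
      _ = χ₁ ((g : ZMod N₁)) * χ₂ ((g : ZMod N₂)) * (g : ℂ) ^ (k : ℕ)
            * (χ₁ (((a * b / g : ℕ) : ZMod N₁))
              * χ₂ (((m * n / g ^ 2 / (a * b / g) : ℕ) : ZMod N₂))
              * ((a * b / g : ℕ) : ℂ) ^ (k : ℕ)) := by ring
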